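/- For a rational α = p/q ∈ (0,1) in lowest terms, define the finite word w(α) = (w_1(α), …, w_{q-1}(α)) with entries in {0, 1/2, 1} by: w_j(α) = 1 if {jα} > 1-α, w_j(α) = 0 if {jα} < 1-α, and w_j(α) = 1/2 if {jα} = 1-α; for 1 ≤ j ≤ q-1 the last case occurs exactly for j = q-1. Then the map α ↦ w(α) is strictly increasing with respect to lexicographic order: if 0 < p¹/q¹ < p²/q² < 1 are rationals in lowest terms, then there is an index J ≤ min(q¹, q²) - 1 such that w_j(p¹/q¹) = w_j(p²/q²) for all j < J and w_J(p¹/q¹) < w_J(p²/q²). -/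

import Mathlib

/-- The word `w(α) = (w_1(α), …, w_{q-1}(α))` associated to a rational
`α = p/q ∈ (0,1)` in lowest terms: `w_j(α) = 1` if `{jα} > 1 - α`, `w_j(α) = 0` if
`{jα} < 1 - α`, and `w_j(α) = 1/2` if `{jα} = 1 - α`. -/
def bifWord (α : ℚ) (j : ℕ) : ℚ :=
  if 1 - α < Int.fract ((j : ℚ) * α) then 1
  else if Int.fract ((j : ℚ) * α) < 1 - α then 0
  else 1 / 2

lemma bifWord_zero {α : ℚ} (h1 : α < 1) : bifWord α 0 = 0 := by
  unfold bifWord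
  norm_num
  rw [if_neg (by linarith), if_pos h1]

lemma bifWord_eq_zero_iff (α : ℚ) (j : ℕ) :
    bifWord α j = 0 ↔ Int.fract ((j : ℚ) * α) < 1 - α := by
  unfold bifWord
  split_ifs with hA hB <;> norm_num <;> linarith

lemma bifWord_eq_half (α : ℚ) (j : ℕ) (h : bifWord α j = 1/2) :
    Int.fract ((j : ℚ) * α) = 1 - α := by
  unfold bifWord at h
  split_ifs at h with hA hB <;> norm_num at h <;> linarith

lemma fract_def (x : ℚ) : Int.fract x = x - ⌊x⌋ := rfl

lemma stepA {α : ℚ} (hα0 : 0 < α) (j : ℕ) (h : bifWord α j = 0) :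
    ⌊(j:ℚ)*α + α⌋ = ⌊(j:ℚ)*α⌋ := by
  rw [bifWord_eq_zero_iff, fract_def] at h
  have h1 : (⌊(j:ℚ)*α⌋ : ℚ) ≤ (j:ℚ)*α := Int.floor_le _
  rw [Int.floor_eq_iff]
  constructor <;> push_cast <;> linarith

lemma stepB {α : ℚ} (hα1 : α < 1) (j : ℕ) (h : bifWord α j ≠ 0) :
    ⌊(j:ℚ)*α + α⌋ = ⌊(j:ℚ)*α⌋ + 1 := by
  rw [Ne, bifWord_eq_zero_iff, not_lt, fract_def] at h
  have h2 : (j:ℚ)*α < ⌊(j:ℚ)*α⌋ + 1 := Int.lt_floor_add_one _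
  rw [Int.floor_eq_iff]
  constructor <;> push_cast <;> linarith

lemma floor_agree {α β : ℚ} (hα0 : 0 < α) (hα1 : α < 1) (hβ0 : 0 < β) (hβ1 : β < 1)
    (J : ℕ) (hag : ∀ j, 1 ≤ j → j < J → bifWord α j = bifWord β j) :
    ∀ j, j ≤ J → ⌊(j:ℚ)*α⌋ = ⌊(j:ℚ)*β⌋ := by
  intro j
  induction j with
  | zero => intro _; simp
  | succ k ih =>
    intro hk
    have hkJ : k < J := hk
    have hfl := ih (le_of_lt hkJ)
    have hword : (bifWord α k = 0 ↔ bifWord β k = 0) := by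
      rcases Nat.eq_zero_or_pos k with h0 | h1
      · subst h0; rw [bifWord_zero hα1, bifWord_zero hβ1]
      · rw [hag k h1 hkJ]
    have hcast : ((k+1:ℕ):ℚ) * α = (k:ℚ)*α + α := by push_cast; ring
    have hcastβ : ((k+1:ℕ):ℚ) * β = (k:ℚ)*β + β := by push_cast; ring
    rw [hcast, hcastβ]
    by_cases h : bifWord α k = 0
    · rw [stepA hα0 k h, stepA hβ0 k (hword.mp h), hfl]
    · rw [stepB hα1 k h, stepB hβ1 k (fun hb => h (hword.mpr hb)), hfl]


lemma bifWord_mono {α β : ℚ} {j : ℕ} (hf : ⌊(j:ℚ)*α⌋ = ⌊(j:ℚ)*β⌋)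
    (h : (j:ℚ)*α + α < (j:ℚ)*β + β) : bifWord α j ≤ bifWord β j := by
  have hfQ : ((⌊(j:ℚ)*α⌋ : ℤ) : ℚ) = ((⌊(j:ℚ)*β⌋ : ℤ) : ℚ) := by exact_mod_cast hf
  unfold bifWord
  rw [fract_def, fract_def]
  split_ifs <;> norm_num <;> linarith

/-- at index q-1, the word of p/q has the letter 1/2 -/
lemma bifWord_half (p q : ℕ) (hp : 0 < p) (h : p < q) :
    bifWord ((p:ℚ)/q) (q-1) = 1/2 := by
  have hq : (0:ℚ) < q := by exact_mod_cast (Nat.pos_of_ne_zero (by omega))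
  have hα0 : (0:ℚ) < (p:ℚ)/q := by positivity
  have hα1 : (p:ℚ)/q < 1 := by rw [div_lt_one hq]; exact_mod_cast h
  have hcast : ((q-1:ℕ):ℚ) = (q:ℚ) - 1 := by
    have : 1 ≤ q := by omega
    push_cast [this]; ring
  have hx : ((q-1:ℕ):ℚ) * ((p:ℚ)/q) = -((p:ℚ)/q) + (p:ℤ) := by
    rw [hcast]; push_cast; field_simp; ring
  have hfr : Int.fract (((q-1:ℕ):ℚ) * ((p:ℚ)/q)) = 1 - (p:ℚ)/q := by
    rw [hx, Int.fract_add_intCast, Int.fract_neg, Int.fract_eq_self.mpr ⟨le_of_lt hα0, hα1⟩]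
    rw [Int.fract_eq_self.mpr ⟨le_of_lt hα0, hα1⟩]
    exact ne_of_gt hα0
  unfold bifWord
  rw [hfr, if_neg (lt_irrefl _), if_neg (lt_irrefl _)]

/-- a rational with larger denominator does not have letter 1/2 at index q-1 -/
lemma bifWord_ne_half (p q q' : ℕ) (hp : 0 < p) (h : p < q) (hc : Nat.Coprime p q)
    (hq' : 0 < q') (hlt : q' < q) :
    bifWord ((p:ℚ)/q) (q'-1) ≠ 1/2 := by
  intro hhalf
  have hq : (0:ℚ) < q := by exact_mod_cast (Nat.pos_of_ne_zero (by omega))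
  have hfr := bifWord_eq_half _ _ hhalf
  rw [fract_def] at hfr
  have hcast : ((q'-1:ℕ):ℚ) = (q':ℚ) - 1 := by
    push_cast [Nat.one_le_iff_ne_zero.mpr (Nat.pos_iff_ne_zero.mp hq')]; ring
  -- q' * (p/q) = floor + 1, an integer
  set n : ℤ := ⌊((q'-1:ℕ):ℚ) * ((p:ℚ)/q)⌋ with hn
  have key : (q':ℚ) * ((p:ℚ)/q) = (n:ℚ) + 1 := by
    rw [hcast] at hfr
    linarith [hfr]
  have keyZ : (q' * p : ℤ) = (n + 1) * q := by
    have : (q':ℚ) * p = ((n:ℚ)+1) * q := by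
      field_simp at key; linarith [key]
    exact_mod_cast this
  have hdvd : (q:ℤ) ∣ (q':ℤ) * p := ⟨n+1, by linarith [keyZ]⟩
  have hdvdN : q ∣ q' * p := by exact_mod_cast hdvd
  have : q ∣ q' := (Nat.Coprime.dvd_of_dvd_mul_right (hc.symm)) hdvdN
  have := Nat.le_of_dvd hq' this
  omega


/-- The map `α ↦ w(α)` is strictly increasing with respect to the
lexicographic order: if `0 < p¹/q¹ < p²/q² < 1` are rationals in lowest terms, then there
is an index `J ≤ min(q¹, q²) - 1` with `w_j(p¹/q¹) = w_j(p²/q²)` for all `j < J` and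
`w_J(p¹/q¹) < w_J(p²/q²)`. -/
theorem stmt9 (p1 q1 p2 q2 : ℕ)
    (hp1 : 0 < p1) (h1 : p1 < q1) (hc1 : Nat.Coprime p1 q1)
    (hp2 : 0 < p2) (h2 : p2 < q2) (hc2 : Nat.Coprime p2 q2)
    (hlt : (p1 : ℚ) / q1 < (p2 : ℚ) / q2) :
    ∃ J : ℕ, 1 ≤ J ∧ J ≤ min q1 q2 - 1 ∧
      (∀ j, 1 ≤ j → j < J → bifWord ((p1 : ℚ) / q1) j = bifWord ((p2 : ℚ) / q2) j) ∧
      bifWord ((p1 : ℚ) / q1) J < bifWord ((p2 : ℚ) / q2) J := by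
  classical
  set α := (p1:ℚ)/q1 with hαdef
  set β := (p2:ℚ)/q2 with hβdef
  have hq1 : (0:ℚ) < q1 := by exact_mod_cast (show 0 < q1 by omega)
  have hq2 : (0:ℚ) < q2 := by exact_mod_cast (show 0 < q2 by omega)
  have hα0 : 0 < α := by rw [hαdef]; positivity
  have hα1 : α < 1 := by rw [hαdef, div_lt_one hq1]; exact_mod_cast h1
  have hβ0 : 0 < β := by rw [hβdef]; positivity
  have hβ1 : β < 1 := by rw [hβdef, div_lt_one hq2]; exact_mod_cast h2
  have hex : ∃ j, 1 ≤ j ∧ j ≤ min q1 q2 - 1 ∧ bifWord α j ≠ bifWord β j := by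
    rcases lt_trichotomy q1 q2 with hq | hq | hq
    · refine ⟨q1 - 1, by omega, by omega, ?_⟩
      rw [hαdef, hβdef, bifWord_half p1 q1 hp1 h1]
      exact fun hh => (bifWord_ne_half p2 q2 q1 hp2 h2 hc2 (by omega) hq) hh.symm
    · -- q1 = q2
      subst hq
      by_contra hcon
      push_neg at hcon
      have hag : ∀ j, 1 ≤ j → j < q1 → bifWord α j = bifWord β j := by
        intro j hj1 hjq
        exact hcon j hj1 (by omega)
      have hfl := floor_agree hα0 hα1 hβ0 hβ1 q1 hag q1 le_rfl
      have e1 : (q1:ℚ) * α = (p1:ℚ) := by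
        rw [hαdef]; field_simp
      have e2 : (q1:ℚ) * β = (p2:ℚ) := by
        rw [hβdef]; field_simp
      rw [e1, e2, Int.floor_natCast, Int.floor_natCast] at hfl
      have : p1 = p2 := by exact_mod_cast hfl
      subst this
      exact lt_irrefl _ hlt
    · refine ⟨q2 - 1, by omega, by omega, ?_⟩
      rw [hαdef, hβdef, bifWord_half p2 q2 hp2 h2]
      exact bifWord_ne_half p1 q1 q2 hp1 h1 hc1 (by omega) hq
  obtain ⟨j0, hj01, hj0min, hj0ne⟩ := hex
  have hexQ : ∃ j, 1 ≤ j ∧ bifWord α j ≠ bifWord β j := ⟨j0, hj01, hj0ne⟩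
  set J := Nat.find hexQ with hJdef
  have hJ := Nat.find_spec hexQ
  have hag : ∀ j, 1 ≤ j → j < J → bifWord α j = bifWord β j := by
    intro j h1j hjJ
    by_contra hne
    exact (Nat.find_min hexQ hjJ) ⟨h1j, hne⟩
  refine ⟨J, hJ.1, le_trans (Nat.find_min' hexQ ⟨hj01, hj0ne⟩) hj0min, hag, ?_⟩
  have hfl := floor_agree hα0 hα1 hβ0 hβ1 J hag J le_rfl
  have hm : (J:ℚ)*α + α < (J:ℚ)*β + β := by
    have hJβ : (J:ℚ)*α ≤ (J:ℚ)*β :=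
      mul_le_mul_of_nonneg_left (le_of_lt hlt) (by positivity)
    linarith
  exact lt_of_le_of_ne (bifWord_mono hfl hm) hJ.2
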